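/- Let d ∈ ℕ and let V : ℝ^d → ℝ^d be the linear map with matrix (j^{−i−1})_{1≤i,j≤d}, and let v_d = ∏_{1≤i<j≤d} (j − i). Then V is invertible and the image V(ℤ^d) contains the lattice v_d ℤ^d. -/
import Mathlib


/-- The Vandermonde-type matrix `V = (j^{-i-1})_{1 ≤ i,j ≤ d}` is invertible,
and `V(ℤ^d)` contains `v_d ℤ^d` with `v_d = ∏_{i<j} (j - i)`. -/
theorem stmt_14 (d : ℕ) (V : Matrix (Fin d) (Fin d) ℝ)
    (hV : ∀ i j, V i j = (((j : ℕ) + 1 : ℝ))⁻¹ ^ ((i : ℕ) + 2)) :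
    V.det ≠ 0 ∧
    ∀ y : Fin d → ℤ, ∃ x : Fin d → ℤ,
      V.mulVec (fun k => (x k : ℝ)) =
        fun k => (((∏ p ∈ Finset.univ.filter
            (fun p : Fin d × Fin d => p.1 < p.2),
            ((p.2 : ℕ) - (p.1 : ℕ) : ℤ)) * y k : ℤ) : ℝ) := by
  classical
  set c : ℤ := ∏ p ∈ Finset.univ.filter
      (fun p : Fin d × Fin d => p.1 < p.2), ((p.2 : ℕ) - (p.1 : ℕ) : ℤ) with hc
  -- rewrite c as a double product
  have hc2 : c = ∏ i : Fin d, ∏ j ∈ Finset.Ioi i, (((j : ℕ) : ℤ) - ((i : ℕ) : ℤ)) := by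
    rw [hc, Finset.prod_filter, ← Finset.univ_product_univ, Finset.prod_product]
    refine Finset.prod_congr rfl fun i _ => ?_
    rw [← Finset.prod_filter]
    congr 1
    ext j
    simp
  have hcpos : 0 < c := by
    rw [hc2]
    refine Finset.prod_pos fun i _ => Finset.prod_pos fun j hj => ?_
    rw [Finset.mem_Ioi] at hj
    have : (i : ℕ) < (j : ℕ) := hj
    omega
  -- the integer matrix M
  set M : Matrix (Fin d) (Fin d) ℤ :=
    Matrix.of (fun i j => (((j : ℕ) : ℤ) + 1) ^ (d - 1 - (i : ℕ))) with hM
  set σ : Equiv.Perm (Fin d) := Fin.revPerm with hσ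
  set ε : ℤˣ := Equiv.Perm.sign σ with hε
  -- det M = ε * c
  have hdetM : M.det = (ε : ℤ) * c := by
    have h1 : M = ((Matrix.vandermonde (fun j : Fin d => ((j : ℕ) : ℤ) + 1)).transpose).submatrix σ id := by
      ext i j
      simp [hM, Matrix.vandermonde, Fin.val_rev, hσ]
      congr 1
      omega
    rw [h1, Matrix.det_permute, Matrix.det_transpose, Matrix.det_vandermonde, hc2]
    congr 1
    refine Finset.prod_congr rfl fun i _ => Finset.prod_congr rfl fun j _ => ?_
    ring
  have hdetM0 : M.det ≠ 0 := by
    rw [hdetM]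
    exact mul_ne_zero (Units.ne_zero ε) (ne_of_gt hcpos)
  -- relation V * D = M over ℝ
  set D : Matrix (Fin d) (Fin d) ℝ :=
    Matrix.diagonal (fun j : Fin d => (((j : ℕ) : ℝ) + 1) ^ (d + 1)) with hD
  have hVD : V * D = M.map (Int.cast : ℤ → ℝ) := by
    ext i j
    have hne : (((j : ℕ) : ℝ) + 1) ≠ 0 := by positivity
    rw [Matrix.mul_diagonal, hV]
    have hsplit : (((j : ℕ) : ℝ) + 1) ^ (d + 1)
        = (((j : ℕ) : ℝ) + 1) ^ ((i : ℕ) + 2) * (((j : ℕ) : ℝ) + 1) ^ (d - 1 - (i : ℕ)) := by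
      rw [← pow_add]
      congr 1
      have := i.isLt
      omega
    rw [hsplit, inv_pow, inv_mul_cancel_left₀ (pow_ne_zero _ hne)]
    simp [hM]
  have hdetV : V.det ≠ 0 := by
    intro h0
    have h1 : (V * D).det = 0 := by rw [Matrix.det_mul, h0, zero_mul]
    have h2 : (M.map (Int.cast : ℤ → ℝ)).det = ((M.det : ℤ) : ℝ) := by
      simpa using (RingHom.map_det (Int.castRingHom ℝ) M).symm
    rw [hVD, h2] at h1
    exact hdetM0 (by exact_mod_cast h1)
  refine ⟨hdetV, fun y => ?_⟩
  -- construct the integer preimage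
  set z : Fin d → ℤ := M.adjugate.mulVec y with hz
  set x : Fin d → ℤ := fun k => (ε : ℤ) * ((((k : ℕ) : ℤ) + 1) ^ (d + 1) * z k) with hx
  refine ⟨x, ?_⟩
  have hMz : M.mulVec z = fun k => M.det * y k := by
    rw [hz, Matrix.mulVec_mulVec, Matrix.mul_adjugate, Matrix.smul_mulVec,
      Matrix.one_mulVec]
    rfl
  have hcast : (M.map (Int.cast : ℤ → ℝ)).mulVec (fun k => (z k : ℝ))
      = fun k => ((M.mulVec z k : ℤ) : ℝ) := by
    funext k
    simp [Matrix.mulVec, dotProduct, Matrix.map_apply]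
  have hDmul : D.mulVec (fun k => (z k : ℝ))
      = fun k : Fin d => (((((k : ℕ) : ℤ) + 1) ^ (d + 1) * z k : ℤ) : ℝ) := by
    funext k
    rw [Matrix.mulVec_diagonal]
    push_cast
    ring
  have key : V.mulVec (fun k : Fin d => (((((k : ℕ) : ℤ) + 1) ^ (d + 1) * z k : ℤ) : ℝ)) =
      fun k => ((M.det * y k : ℤ) : ℝ) := by
    rw [← hDmul, Matrix.mulVec_mulVec, hVD, hcast, hMz]
  funext k
  have hsmul : V.mulVec (fun j => ((x j : ℤ) : ℝ)) k
      = ((ε : ℤ) : ℝ) *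
        V.mulVec (fun j : Fin d => (((((j : ℕ) : ℤ) + 1) ^ (d + 1) * z j : ℤ) : ℝ)) k := by
    simp only [Matrix.mulVec, dotProduct, Finset.mul_sum, hx]
    refine Finset.sum_congr rfl fun j _ => by push_cast; ring
  rw [hsmul, congrFun key k, hdetM]
  have hu : ((ε : ℤ) : ℝ) * ((ε : ℤ) : ℝ) = 1 := by
    have h1 : (ε : ℤ) * (ε : ℤ) = 1 := by
      rw [← Units.val_mul, Int.units_mul_self, Units.val_one]
    exact_mod_cast congrArg (Int.cast : ℤ → ℝ) h1
  push_cast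
  linear_combination ((c : ℝ) * ((y k : ℤ) : ℝ)) * hu
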